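/- Let p be an odd prime. Then \sum_{j=0}^{(p-3)/2} n_j \cdot P_j\big(4\cos^2(\pi/(2p)) - 2\big) = \dfrac{p}{4 \sin^2(\pi/p)}, an identity of real numbers; equivalently, R_p(\|\mathbf{f}_p\|) = \|\mathbf{F}_p\| where \|\mathbf{f}_p\| = 4\cos^2(\pi/(2p)) and \|\mathbf{F}_p\| = p/(4\sin^2(\pi/p)). -/

import Mathlib

/-- The modified Chebyshev polynomials: `P 0 = 1`, `P 1 = X`,
`P (j+2) = X * P (j+1) - P j`. -/
noncomputable def modCheb : ℕ → Polynomial ℤ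
  | 0 => 1
  | 1 => Polynomial.X
  | j + 2 => Polynomial.X * modCheb (j + 1) - modCheb j

/-- The coefficients `n_j`: `(p-1-j)/2` for even `j`, `(j+1)/2` for odd `j`. -/
def nCoeff (p j : ℕ) : ℕ := if j % 2 = 0 then (p - 1 - j) / 2 else (j + 1) / 2

open Real Finset

private lemma sinsum (a b : ℝ) : sin (a+b) + sin (a-b) = 2 * sin a * cos b := by
  rw [sin_add, sin_sub]; ring

private lemma cosdiff (a b : ℝ) : cos (a-b) - cos (a+b) = 2 * sin a * sin b := by
  rw [cos_sub, cos_add]; ring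

private lemma cheb_eval (x : ℝ) : ∀ j : ℕ,
    (Polynomial.aeval (2 * cos x) (modCheb j)) * sin x = sin (((j:ℝ)+1)*x) := by
  have key : ∀ j : ℕ,
      (Polynomial.aeval (2 * cos x) (modCheb j)) * sin x = sin (((j:ℝ)+1)*x) ∧
      (Polynomial.aeval (2 * cos x) (modCheb (j+1))) * sin x = sin (((j:ℝ)+2)*x) := by
    intro j
    induction j with
    | zero =>
      constructor
      · simp [modCheb]
      · simp only [modCheb, Polynomial.aeval_X]
        norm_num
        rw [show ((2:ℝ))*x = 2*x by ring, sin_two_mul]; ring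
    | succ n ih =>
      have e1 : ((n+1:ℕ):ℝ)+1 = (n:ℝ)+2 := by push_cast; ring
      refine ⟨by rw [e1]; exact ih.2, ?_⟩
      show (Polynomial.aeval (2*cos x) (modCheb (n+2))) * sin x = _
      rw [show modCheb (n+2) = Polynomial.X * modCheb (n+1) - modCheb n from rfl]
      rw [map_sub, map_mul, Polynomial.aeval_X, sub_mul, mul_assoc, ih.1, ih.2]
      have h := sinsum (((n:ℝ)+2)*x) x
      rw [show ((n:ℝ)+2)*x + x = ((n:ℝ)+1+2)*x by ring,
          show ((n:ℝ)+2)*x - x = ((n:ℝ)+1)*x by ring] at h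
      push_cast
      linarith
  exact fun j => (key j).1

private lemma sumE (x : ℝ) (n : ℕ) :
    (∑ k ∈ range n, sin (((k:ℝ)+1)*x)) * (2 * sin (x/2)) = cos (x/2) - cos ((2*(n:ℝ)+1)*x/2) := by
  induction n with
  | zero => norm_num
  | succ n ih =>
    rw [sum_range_succ, add_mul, ih]
    have h := cosdiff (((n:ℝ)+1)*x) (x/2)
    rw [show ((n:ℝ)+1)*x - x/2 = (2*(n:ℝ)+1)*x/2 by ring,
        show ((n:ℝ)+1)*x + x/2 = (2*((n:ℝ)+1)+1)*x/2 by ring] at h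
    push_cast
    linarith

private lemma sumE' (x : ℝ) (n : ℕ) :
    (∑ k ∈ range n, (-1:ℝ)^(k+1) * sin (((k:ℝ)+1)*x)) * (2 * cos (x/2)) =
      (-1)^n * sin ((2*(n:ℝ)+1)*x/2) - sin (x/2) := by
  induction n with
  | zero => norm_num
  | succ n ih =>
    rw [sum_range_succ, add_mul, ih]
    have h := sinsum (((n:ℝ)+1)*x) (x/2)
    rw [show ((n:ℝ)+1)*x - x/2 = (2*(n:ℝ)+1)*x/2 by ring,
        show ((n:ℝ)+1)*x + x/2 = (2*((n:ℝ)+1)+1)*x/2 by ring] at h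
    push_cast
    linear_combination ((-1:ℝ)^n) * h

private lemma sumC (x : ℝ) (n : ℕ) :
    (∑ k ∈ range n, (-1:ℝ)^(k+1) * ((k:ℝ)+1) * sin (((k:ℝ)+1)*x)) * (4 * cos (x/2)^2) =
      (-1)^n * (((n:ℝ)+1) * sin ((n:ℝ)*x) + (n:ℝ) * sin (((n:ℝ)+1)*x)) := by
  have hc : cos (x/2)^2 = (1 + cos x)/2 := by
    have h0 := Real.cos_two_mul (x/2)
    rw [show 2*(x/2) = x by ring] at h0; linarith
  induction n with
  | zero => norm_num
  | succ n ih =>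
    rw [sum_range_succ, add_mul, ih]
    have h := sinsum (((n:ℝ)+1)*x) x
    rw [show ((n:ℝ)+1)*x - x = (n:ℝ)*x by ring,
        show ((n:ℝ)+1)*x + x = ((n:ℝ)+1+1)*x by ring] at h
    rw [hc]
    push_cast
    linear_combination ((-1:ℝ)^n * ((n:ℝ)+1)) * h

/-- For an odd prime `p`:
`∑_{j=0}^{(p-3)/2} n_j P_j(4 cos²(π/(2p)) - 2) = p / (4 sin²(π/p))`,
i.e. `R_p(‖f_p‖) = ‖F_p‖`. -/
theorem Rp_eval_norm (p : ℕ) (hp : p.Prime) (hodd : Odd p) :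
    ∑ j ∈ Finset.range ((p - 3) / 2 + 1),
        (nCoeff p j : ℝ) *
          Polynomial.aeval (4 * Real.cos (Real.pi / (2 * p)) ^ 2 - 2) (modCheb j) =
      (p : ℝ) / (4 * Real.sin (Real.pi / p) ^ 2) := by
  obtain ⟨m, hm⟩ := hodd
  have hp3 : 3 ≤ p := by have := hp.two_le; omega
  have hrange : (p-3)/2 + 1 = m := by omega
  set θ : ℝ := π / p with hθ
  have hppos : (0:ℝ) < p := by exact_mod_cast (by omega : 0 < p)
  have hpne : (p:ℝ) ≠ 0 := ne_of_gt hppos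
  have hθpos : 0 < θ := div_pos Real.pi_pos hppos
  have hθlt : θ < π := by
    rw [hθ, div_lt_iff₀ hppos]
    have hp1 : (1:ℝ) < p := by exact_mod_cast (by omega : 1 < p)
    nlinarith [mul_pos Real.pi_pos (sub_pos.mpr hp1)]
  have hsinθ : 0 < sin θ := Real.sin_pos_of_pos_of_lt_pi hθpos hθlt
  have hsinθne : sin θ ≠ 0 := ne_of_gt hsinθ
  have hs : 0 < sin (θ/2) := Real.sin_pos_of_pos_of_lt_pi (by linarith) (by linarith [Real.pi_pos])
  have hc : 0 < cos (θ/2) := Real.cos_pos_of_mem_Ioo ⟨by linarith [Real.pi_pos], by linarith⟩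
  have hsne : sin (θ/2) ≠ 0 := ne_of_gt hs
  have hcne : cos (θ/2) ≠ 0 := ne_of_gt hc
  have hsin2 : sin θ = 2 * sin (θ/2) * cos (θ/2) := by
    have h0 := Real.sin_two_mul (θ/2)
    rw [show 2*(θ/2) = θ by ring] at h0
    linarith
  have hpcast : (p:ℝ) = 2*m+1 := by exact_mod_cast congrArg (Nat.cast : ℕ → ℝ) hm
  -- argument equals 2 cos θ
  have harg : 4 * Real.cos (π / (2 * p)) ^ 2 - 2 = 2 * cos θ := by
    have h0 := Real.cos_two_mul (π / (2*p))
    rw [show 2*(π/(2*(p:ℝ))) = π/p by field_simp] at h0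
    rw [← hθ] at h0
    linarith
  -- special values
  have hspec : (2*(m:ℝ)+1)*θ/2 = π/2 := by
    rw [hθ, ← hpcast]; field_simp
  have hmθ : (m:ℝ)*θ = π/2 - θ/2 := by
    have : (2*(m:ℝ)+1)*θ = π := by
      have := hspec; linarith
    linarith
  have hm1θ : ((m:ℝ)+1)*θ = π/2 + θ/2 := by
    have : (2*(m:ℝ)+1)*θ = π := by have := hspec; linarith
    linarith
  have hsin_m : sin ((m:ℝ)*θ) = cos (θ/2) := by rw [hmθ, Real.sin_pi_div_two_sub]
  have hsin_m1 : sin (((m:ℝ)+1)*θ) = cos (θ/2) := by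
    rw [hm1θ, Real.sin_add, Real.sin_pi_div_two, Real.cos_pi_div_two]; ring
  -- coefficient identity
  have hcoeff : ∀ j ∈ range m, (nCoeff p j : ℝ) =
      (p:ℝ)/4 - (-1:ℝ)^(j+1) * (p:ℝ)/4 + (-1:ℝ)^(j+1) * ((j:ℝ)+1)/2 := by
    intro j hj
    have hjm : j < m := mem_range.mp hj
    rcases Nat.even_or_odd j with he | ho
    · obtain ⟨i, hi⟩ := he
      have hval : nCoeff p j = m - i := by
        unfold nCoeff; split <;> omega
      have hneg : (-1:ℝ)^(j+1) = -1 := Odd.neg_one_pow ⟨i, by omega⟩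
      rw [hval, hneg]
      have hile : i ≤ m := by omega
      rw [Nat.cast_sub hile]
      have hjcast : (j:ℝ) = 2*i := by rw [hi]; push_cast; ring
      rw [hjcast, hpcast]; ring
    · obtain ⟨i, hi⟩ := ho
      have hval : nCoeff p j = i + 1 := by
        unfold nCoeff; split <;> omega
      have hneg : (-1:ℝ)^(j+1) = 1 := Even.neg_one_pow ⟨i+1, by omega⟩
      rw [hval, hneg]
      have hjcast : (j:ℝ) = 2*i+1 := by rw [hi]; push_cast; ring
      push_cast
      rw [hjcast]; ring
  -- the three sums
  set SE := ∑ k ∈ range m, sin (((k:ℝ)+1)*θ) with hSE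
  set SE' := ∑ k ∈ range m, (-1:ℝ)^(k+1) * sin (((k:ℝ)+1)*θ) with hSE'
  set SC := ∑ k ∈ range m, (-1:ℝ)^(k+1) * ((k:ℝ)+1) * sin (((k:ℝ)+1)*θ) with hSC
  have hE := sumE θ m
  have hE'0 := sumE' θ m
  have hC0 := sumC θ m
  rw [← hSE] at hE
  rw [← hSE'] at hE'0
  rw [← hSC] at hC0
  rw [hspec, Real.cos_pi_div_two] at hE
  rw [hspec, Real.sin_pi_div_two, mul_one] at hE'0
  rw [hsin_m, hsin_m1] at hC0
  have eSE : SE = cos (θ/2) / (2 * sin (θ/2)) := by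
    rw [eq_div_iff (by positivity)]; linarith
  have eSE' : SE' = ((-1:ℝ)^m - sin (θ/2)) / (2 * cos (θ/2)) := by
    rw [eq_div_iff (by positivity)]; linarith
  have eSC : SC = (-1:ℝ)^m * ((p:ℝ) * cos (θ/2)) / (4 * cos (θ/2)^2) := by
    rw [eq_div_iff (by positivity)]
    rw [hC0, hpcast]; ring
  -- key sum identity
  have key : ∑ j ∈ range m, (nCoeff p j : ℝ) * sin (((j:ℝ)+1)*θ) = (p:ℝ) / (4 * sin θ) := by
    have hsplit : ∑ j ∈ range m, (nCoeff p j : ℝ) * sin (((j:ℝ)+1)*θ) =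
        (p:ℝ)/4 * SE - (p:ℝ)/4 * SE' + (1/2) * SC := by
      rw [hSE, hSE', hSC, mul_sum, mul_sum, mul_sum, ← sum_sub_distrib, ← sum_add_distrib]
      refine sum_congr rfl fun j hj => ?_
      rw [hcoeff j hj]; ring
    rw [hsplit, eSE, eSE', eSC, hsin2]
    have pyth : sin (θ/2)^2 + cos (θ/2)^2 = 1 := Real.sin_sq_add_cos_sq _
    field_simp
    linear_combination pyth
  -- finish
  rw [hrange]
  have hterm : ∀ j ∈ range m, (nCoeff p j : ℝ) *
      Polynomial.aeval (4 * Real.cos (π / (2 * p)) ^ 2 - 2) (modCheb j) =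
      (nCoeff p j : ℝ) * sin (((j:ℝ)+1)*θ) / sin θ := by
    intro j _
    rw [harg, eq_div_iff hsinθne, mul_assoc, cheb_eval θ j]
  rw [sum_congr rfl hterm, ← sum_div, key]
  rw [div_div]
  congr 1
  rw [sq]; ring
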